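/- (Consequence of Björner's theorem) Let |X| = m = 2s+1. If a Sperner family in 2^X consists of exactly t sets of size s+1 and t sets of size s, then t ≤ C(m−1, s−1) = C(2s, s−1). -/

import Mathlib

open Finset

open FinsetFamily

lemma sperner_aux (s t : ℕ) (𝒮 : Finset (Finset (Fin (2 * (s + 1) + 1))))
    (hanti : IsAntichain (· ⊆ ·) (↑𝒮 : Set (Finset (Fin (2 * (s + 1) + 1)))))
    (hsizes : ∀ A ∈ 𝒮, A.card = s + 1 ∨ A.card = s + 2)
    (htop : (𝒮.filter fun A => A.card = s + 2).card = t)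
    (hbot : (𝒮.filter fun A => A.card = s + 1).card = t) :
    t ≤ Nat.choose (2 * (s + 1)) s := by
  by_contra hlt
  push_neg at hlt
  set 𝒜 : Finset (Finset (Fin (2 * (s + 1) + 1))) := 𝒮.filter fun A => A.card = s + 2 with h𝒜
  set ℬ : Finset (Finset (Fin (2 * (s + 1) + 1))) := 𝒮.filter fun A => A.card = s + 1 with hℬ
  have h𝒜sized : (↑𝒜 : Set (Finset (Fin (2 * (s + 1) + 1)))).Sized (s + 2) := by
    intro A hA
    simpa using (mem_filter.1 hA).2
  -- symmetry of binomial coefficients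
  have hsymm : Nat.choose (2 * (s + 1)) (s + 2) = Nat.choose (2 * (s + 1)) s := by
    rw [← Nat.choose_symm (by omega)]
    congr 1
    omega
  -- Kruskal-Katona (Lovász form) gives a lower bound on the shadow
  have hKK : Nat.choose (2 * (s + 1)) (s + 1) ≤ (∂ 𝒜).card := by
    have := Finset.kruskal_katona_lovasz_form (n := 2 * (s + 1) + 1) (i := 1)
      (r := s + 2) (k := 2 * (s + 1)) (𝒜 := 𝒜) (by omega) (by omega) (by omega)
      h𝒜sized (by rw [hsymm, htop]; omega)
    rw [show (s + 2 - 1) = s + 1 from rfl, Function.iterate_one] at this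
    convert this using 2
  -- the shadow of 𝒜 is disjoint from ℬ
  have hdisj : Disjoint (∂ 𝒜) ℬ := by
    rw [Finset.disjoint_left]
    intro S hS hSB
    obtain ⟨A, hA, a, ha, rfl⟩ := mem_shadow_iff.1 hS
    have hA𝒮 : A ∈ 𝒮 := (mem_filter.1 hA).1
    have hS𝒮 : A.erase a ∈ 𝒮 := (mem_filter.1 hSB).1
    have hne : A.erase a ≠ A := by
      intro h
      have := (mem_filter.1 hA).2
      have := (mem_filter.1 hSB).2
      rw [h] at this
      omega
    exact hanti hS𝒮 hA𝒮 hne (erase_subset _ _)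
  -- both live in level s+1
  have hsub : ∂ 𝒜 ∪ ℬ ⊆ Finset.powersetCard (s + 1) Finset.univ := by
    intro S hS
    rw [mem_powersetCard]
    refine ⟨subset_univ _, ?_⟩
    rcases mem_union.1 hS with h | h
    · obtain ⟨A, hA, a, ha, rfl⟩ := mem_shadow_iff.1 h
      have := (mem_filter.1 hA).2
      rw [card_erase_of_mem ha, this]
      omega
    · exact (mem_filter.1 h).2
  have hcard : (∂ 𝒜).card + ℬ.card ≤ Nat.choose (2 * (s + 1) + 1) (s + 1) := by
    rw [← card_union_of_disjoint hdisj]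
    calc (∂ 𝒜 ∪ ℬ).card ≤ (Finset.powersetCard (s + 1) (Finset.univ : Finset (Fin (2 * (s + 1) + 1)))).card :=
          card_le_card hsub
      _ = Nat.choose (2 * (s + 1) + 1) (s + 1) := by
          rw [card_powersetCard, card_univ, Fintype.card_fin]
  have hpascal : Nat.choose (2 * (s + 1) + 1) (s + 1)
      = Nat.choose (2 * (s + 1)) s + Nat.choose (2 * (s + 1)) (s + 1) :=
    Nat.choose_succ_succ _ _
  rw [hbot] at hcard
  omega

/-- Consequence of Björner's theorem: in a ground set of size `m = 2s + 1`, a Sperner family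
consisting of exactly `t` sets of size `s + 1` and `t` sets of size `s` has
`t ≤ C(m - 1, s - 1) = C(2s, s - 1)`. -/
theorem sperner_two_level_bound {α : Type*} [DecidableEq α] [Fintype α] (s t : ℕ)
    (hs : 1 ≤ s) (hm : Fintype.card α = 2 * s + 1) (𝒮 : Finset (Finset α))
    (hanti : IsAntichain (· ⊆ ·) (↑𝒮 : Set (Finset α)))
    (hsizes : ∀ A ∈ 𝒮, A.card = s ∨ A.card = s + 1)
    (htop : (𝒮.filter fun A => A.card = s + 1).card = t)
    (hbot : (𝒮.filter fun A => A.card = s).card = t) :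
    t ≤ Nat.choose (2 * s) (s - 1) := by
  obtain ⟨s', rfl⟩ : ∃ s', s = s' + 1 := ⟨s - 1, by omega⟩
  have e : α ≃ Fin (2 * (s' + 1) + 1) := Fintype.equivFinOfCardEq hm
  set f : Finset α → Finset (Fin (2 * (s' + 1) + 1)) := fun A => A.image e with hf
  have hfinj : Function.Injective f := Finset.image_injective e.injective
  have hfcard : ∀ A : Finset α, (f A).card = A.card := fun A =>
    Finset.card_image_of_injective _ e.injective
  set 𝒮' : Finset (Finset (Fin (2 * (s' + 1) + 1))) := 𝒮.image f with h𝒮'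
  have hfilter : ∀ k : ℕ, 𝒮'.filter (fun A => A.card = k)
      = (𝒮.filter fun A => A.card = k).image f := by
    intro k
    rw [h𝒮', Finset.filter_image]
    congr 1
    ext A
    simp [hfcard]
  have key : t ≤ Nat.choose (2 * (s' + 1)) s' := by
    refine sperner_aux s' t 𝒮' ?_ ?_ ?_ ?_
    · intro A' hA' B' hB' hne hsub
      obtain ⟨A, hA, rfl⟩ := Finset.mem_image.1 (Finset.mem_coe.1 hA')
      obtain ⟨B, hB, rfl⟩ := Finset.mem_image.1 (Finset.mem_coe.1 hB')
      exact hanti (Finset.mem_coe.2 hA) (Finset.mem_coe.2 hB)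
        (fun h => hne (by rw [h]))
        ((Finset.image_subset_image_iff e.injective).1 hsub)
    · intro A' hA'
      obtain ⟨A, hA, rfl⟩ := Finset.mem_image.1 hA'
      rw [hfcard]
      exact hsizes A hA
    · rw [hfilter, Finset.card_image_of_injective _ hfinj, ← htop]
    · rw [hfilter, Finset.card_image_of_injective _ hfinj, ← hbot]
  simpa using key
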